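/- With the explicit presentation below, the pair (C(g), η) is a universal pair for (g, g): for every commutative K-algebra C and every Lie algebra morphism f : g → C ⊗ g there exists a unique K-algebra homomorphism Φ : C(g) → C such that f = (Φ ⊗ id_g) ∘ η. -/

import Mathlib

/-!
Statement 3: With the explicit presentation of `C(g)` by generators `X_{s i}` and the
universal polynomials as relations, the pair `(C(g), η)` is a universal pair for `(g, g)`:
for every commutative `K`-algebra `C` and every Lie algebra morphism `f : g → C ⊗ g` there
exists a unique `K`-algebra homomorphism `Φ : C(g) → C` with `f = (Φ ⊗ id_g) ∘ η`.
-/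

open TensorProduct

universe u

/-- The base-change Lie bracket on `A ⊗[K] g` is `K`-bilinear, so `A ⊗[K] g` is a Lie algebra
over `K` (and not merely over `A`). -/
noncomputable instance baseChangeLieAlgebra {K : Type u} [Field K]
    {A : Type u} [CommRing A] [Algebra K A]
    {L : Type u} [LieRing L] [LieAlgebra K L] : LieAlgebra K (A ⊗[K] L) :=
  { (inferInstance : Module K (A ⊗[K] L)) with
    lie_smul := fun t x y => by
      rw [← algebraMap_smul A t y, lie_smul, algebraMap_smul] }

theorem explicit_presentation_isUniversal
    (K : Type u) [Field K] [CharZero K]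
    (g : Type u) [LieRing g] [LieAlgebra K g]
    (n : ℕ) (b : Module.Basis (Fin n) K g)
    (α : Fin n → Fin n → Fin n → K)
    (hα : ∀ i j : Fin n, ⁅b i, b j⁆ = ∑ s : Fin n, α s i j • b s)
    (J : Ideal (MvPolynomial (Fin n × Fin n) K))
    (hJ : J = Ideal.span (Set.range fun p : Fin n × Fin n × Fin n =>
      (∑ u : Fin n, MvPolynomial.C (α u p.2.1 p.2.2) * MvPolynomial.X (p.1, u)) -
        ∑ s : Fin n, ∑ t : Fin n,
          MvPolynomial.C (α p.1 s t) * MvPolynomial.X (s, p.2.1) * MvPolynomial.X (t, p.2.2)))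
    (η : g →ₗ[K] (MvPolynomial (Fin n × Fin n) K ⧸ J) ⊗[K] g)
    (hη : η = b.constr K fun i : Fin n =>
      ∑ s : Fin n, Ideal.Quotient.mk J (MvPolynomial.X (s, i)) ⊗ₜ[K] b s) :
    ∀ (C : Type u) [CommRing C] [Algebra K C], ∀ f : g →ₗ⁅K⁆ C ⊗[K] g,
      ∃! Φ : (MvPolynomial (Fin n × Fin n) K ⧸ J) →ₐ[K] C,
        ∀ x : g, f x = LinearMap.rTensor g Φ.toLinearMap (η x) := by

  classical
  intro C _ _ f
  set B := b.baseChange C with hB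
  set c : Fin n → Fin n → C := fun s i => B.repr (f (b i)) s with hc
  have hrep : ∀ (x : C) (s a : Fin n), B.repr (x ⊗ₜ[K] b s) a = if s = a then x else 0 := by
    intro x s a
    rw [hB, Module.Basis.baseChange_repr_tmul, Module.Basis.repr_self, Finsupp.single_apply]
    by_cases h : s = a <;> simp [h]
  have hfb : ∀ i, f (b i) = ∑ s, c s i ⊗ₜ[K] b s := by
    intro i
    conv_lhs => rw [← B.sum_repr (f (b i))]
    refine Finset.sum_congr rfl fun s _ => ?_
    rw [hB, Module.Basis.baseChange_apply, TensorProduct.smul_tmul', smul_eq_mul, mul_one]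
  -- the key relation among the coefficients, from `f` being a Lie algebra morphism
  have key : ∀ a i j : Fin n,
      ∑ u, algebraMap K C (α u i j) * c a u
        = ∑ s, ∑ t, algebraMap K C (α a s t) * (c s i * c t j) := by
    intro a i j
    have sum_lie' : ∀ (d : Fin n → C ⊗[K] g) (m : C ⊗[K] g),
        ⁅∑ s, d s, m⁆ = ∑ s, ⁅d s, m⁆ := fun d m =>
      map_sum (AddMonoidHom.mk' (fun x => ⁅x, m⁆) fun x y => add_lie x y m) d Finset.univ
    have lie_sum' : ∀ (m : C ⊗[K] g) (d : Fin n → C ⊗[K] g),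
        ⁅m, ∑ s, d s⁆ = ∑ s, ⁅m, d s⁆ := fun m d =>
      map_sum (AddMonoidHom.mk' (fun x => ⁅m, x⁆) fun x y => lie_add m x y) d Finset.univ
    have h1 : ∑ s, α s i j • f (b s) = ⁅f (b i), f (b j)⁆ := by
      rw [← f.map_lie, hα i j,
        show f (∑ s, α s i j • b s) = f.toLinearMap (∑ s, α s i j • b s) from rfl,
        map_sum]
      simp only [map_smul, LieHom.coe_toLinearMap]
    have h1' := congrArg (fun v => B.repr v a) h1
    simp only [map_sum, map_smul, hfb, Finset.smul_sum, TensorProduct.smul_tmul',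
      LieAlgebra.ExtendScalars.bracket_tmul, lie_sum', sum_lie', hα, TensorProduct.tmul_sum,
      TensorProduct.tmul_smul, hrep, Finsupp.smul_apply, smul_ite, smul_zero,
      Finset.sum_apply', Finset.sum_ite_eq', Finset.mem_univ, if_true] at h1'
    calc ∑ u, algebraMap K C (α u i j) * c a u
        = ∑ u, α u i j • c a u := by
          refine Finset.sum_congr rfl fun u _ => ?_; rw [Algebra.smul_def]
      _ = ∑ s, ∑ t, α a s t • (c s i * c t j) := h1'.trans Finset.sum_comm
      _ = ∑ s, ∑ t, algebraMap K C (α a s t) * (c s i * c t j) := by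
          refine Finset.sum_congr rfl fun s _ => Finset.sum_congr rfl fun t _ => ?_
          rw [Algebra.smul_def]
  -- the algebra map on the polynomial ring
  set Φ0 : MvPolynomial (Fin n × Fin n) K →ₐ[K] C :=
    MvPolynomial.aeval (fun p : Fin n × Fin n => c p.1 p.2) with hΦ0
  have hJ0 : ∀ x ∈ J, Φ0 x = 0 := by
    intro x hx
    rw [hJ] at hx
    have hle : Ideal.span (Set.range fun p : Fin n × Fin n × Fin n =>
        (∑ u : Fin n, MvPolynomial.C (α u p.2.1 p.2.2) * MvPolynomial.X (p.1, u)) -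
          ∑ s : Fin n, ∑ t : Fin n,
            MvPolynomial.C (α p.1 s t) * MvPolynomial.X (s, p.2.1) * MvPolynomial.X (t, p.2.2))
        ≤ RingHom.ker Φ0.toRingHom := by
      rw [Ideal.span_le]
      rintro _ ⟨p, rfl⟩
      simp only [SetLike.mem_coe, RingHom.mem_ker, AlgHom.toRingHom_eq_coe,
        RingHom.coe_coe, map_sub, map_sum, map_mul, MvPolynomial.aeval_C,
        MvPolynomial.aeval_X, sub_eq_zero, hΦ0]
      simpa [mul_assoc] using key p.1 p.2.1 p.2.2
    exact hle hx
  set Φ : (MvPolynomial (Fin n × Fin n) K ⧸ J) →ₐ[K] C :=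
    Ideal.Quotient.liftₐ J Φ0 hJ0 with hΦ
  have hPhiX : ∀ s i : Fin n, Φ (Ideal.Quotient.mk J (MvPolynomial.X (s, i))) = c s i := by
    intro s i
    rw [hΦ, Ideal.Quotient.liftₐ_apply]
    erw [Ideal.Quotient.lift_mk]
    rw [hΦ0]
    simp
  -- any candidate is determined on the generators
  have hdet : ∀ (Ψ : (MvPolynomial (Fin n × Fin n) K ⧸ J) →ₐ[K] C),
      (∀ x : g, f x = LinearMap.rTensor g Ψ.toLinearMap (η x)) →
      ∀ s i : Fin n, Ψ (Ideal.Quotient.mk J (MvPolynomial.X (s, i))) = c s i := by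
    intro Ψ hΨ s i
    have h2 := hΨ (b i)
    rw [hη, Module.Basis.constr_basis, map_sum] at h2
    simp only [LinearMap.rTensor_tmul, AlgHom.toLinearMap_apply] at h2
    have h3 := congrArg (fun v => B.repr v s) h2
    simp only [hfb, map_sum, hrep, Finset.sum_apply', Finset.sum_ite_eq', Finset.mem_univ,
      if_true] at h3
    exact h3.symm
  -- conversely, the value on generators determines the property
  have hsuf : ∀ (Ψ : (MvPolynomial (Fin n × Fin n) K ⧸ J) →ₐ[K] C),
      (∀ s i : Fin n, Ψ (Ideal.Quotient.mk J (MvPolynomial.X (s, i))) = c s i) →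
      ∀ x : g, f x = LinearMap.rTensor g Ψ.toLinearMap (η x) := by
    intro Ψ hΨ
    have heq : (f : g →ₗ[K] C ⊗[K] g) = (LinearMap.rTensor g Ψ.toLinearMap).comp η := by
      apply b.ext
      intro i
      rw [LinearMap.comp_apply, hη, Module.Basis.constr_basis, map_sum]
      simp only [LinearMap.rTensor_tmul, AlgHom.toLinearMap_apply, hΨ]
      exact hfb i
    intro x
    exact LinearMap.congr_fun heq x
  refine ⟨Φ, hsuf Φ hPhiX, ?_⟩
  intro Ψ hΨ
  refine Ideal.Quotient.algHom_ext K (MvPolynomial.algHom_ext fun p => ?_)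
  simp only [AlgHom.comp_apply, Ideal.Quotient.mkₐ_eq_mk]
  rw [hdet Ψ hΨ p.1 p.2, hPhiX p.1 p.2]
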